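/- Let 0 → N → M → L → 0 be a short exact sequence of graded A_n(K)-modules. Then M is strongly generalized Eulerian if and only if both N and L are strongly generalized Eulerian. -/

import Mathlib

open FreeAlgebra

inductive WeylGen (n : ℕ) : Type
  | x : Fin n → WeylGen n
  | d : Fin n → WeylGen n

inductive WeylRel (K : Type) [Field K] (n : ℕ) :
    FreeAlgebra K (WeylGen n) → FreeAlgebra K (WeylGen n) → Prop
  | xx (i j : Fin n) : WeylRel K n (ι K (WeylGen.x i) * ι K (WeylGen.x j))
      (ι K (WeylGen.x j) * ι K (WeylGen.x i))
  | dd (i j : Fin n) : WeylRel K n (ι K (WeylGen.d i) * ι K (WeylGen.d j))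
      (ι K (WeylGen.d j) * ι K (WeylGen.d i))
  | dx_ne (i j : Fin n) (h : i ≠ j) : WeylRel K n (ι K (WeylGen.d i) * ι K (WeylGen.x j))
      (ι K (WeylGen.x j) * ι K (WeylGen.d i))
  | dx (i : Fin n) : WeylRel K n (ι K (WeylGen.d i) * ι K (WeylGen.x i))
      (1 + ι K (WeylGen.x i) * ι K (WeylGen.d i))

/-- The `n`-th Weyl algebra `A_n(K)`. -/
abbrev WeylAlgebra (K : Type) [Field K] (n : ℕ) := RingQuot (WeylRel K n)

variable (K : Type) [Field K] (n : ℕ)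

/-- The generator `X i`. -/
noncomputable def Wx (i : Fin n) : WeylAlgebra K n :=
  RingQuot.mkAlgHom K (WeylRel K n) (ι K (WeylGen.x i))

/-- The generator `∂ i`. -/
noncomputable def Wd (i : Fin n) : WeylAlgebra K n :=
  RingQuot.mkAlgHom K (WeylRel K n) (ι K (WeylGen.d i))

/-- The Euler operator `E_n = ∑ X_i ∂_i`. -/
noncomputable def euler : WeylAlgebra K n := ∑ i : Fin n, Wx K n i * Wd K n i

/-- The monomial `X^γ ∂^α`. -/
noncomputable def Wmonomial (γ α : Fin n → ℕ) : WeylAlgebra K n :=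
  (List.ofFn fun i => Wx K n i ^ γ i).prod * (List.ofFn fun i => Wd K n i ^ α i).prod

/-- `g` is a grading making `M` a graded module over the graded Weyl algebra
(`deg X_i = 1`, `deg ∂_i = -1`): `M` is the internal direct sum of the subgroups `g j` and
the generators act with degrees `1` and `-1`. -/
def IsGradedWeylModule (M : Type) [AddCommGroup M] [Module (WeylAlgebra K n) M]
    (g : ℤ → AddSubgroup M) : Prop :=
  DirectSum.IsInternal g ∧
    (∀ (i : Fin n) (j : ℤ), ∀ m ∈ g j, Wx K n i • m ∈ g (j + 1)) ∧
    (∀ (i : Fin n) (j : ℤ), ∀ m ∈ g j, Wd K n i • m ∈ g (j - 1))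

/-- A graded `A_n(K)`-module is strongly generalized Eulerian if there is a single `a > 0`
such that `(E_n - |w|)^a • w = 0` for every homogeneous `w`. -/
def IsStronglyGeneralizedEulerian (M : Type) [AddCommGroup M] [Module (WeylAlgebra K n) M]
    (g : ℤ → AddSubgroup M) : Prop :=
  ∃ a : ℕ, 0 < a ∧ ∀ (j : ℤ), ∀ m ∈ g j,
    ((euler K n - (j : WeylAlgebra K n)) ^ a) • m = 0

/-- A graded `A_n(K)`-module is generalized Eulerian if for every homogeneous `w` there is
some `a > 0` (depending on `w`) with `(E_n - |w|)^a • w = 0`. -/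
def IsGeneralizedEulerian (M : Type) [AddCommGroup M] [Module (WeylAlgebra K n) M]
    (g : ℤ → AddSubgroup M) : Prop :=
  ∀ (j : ℤ), ∀ m ∈ g j, ∃ a : ℕ, 0 < a ∧
    ((euler K n - (j : WeylAlgebra K n)) ^ a) • m = 0


section AuxGrading


set_option maxHeartbeats 800000 in
set_option synthInstance.maxHeartbeats 200000 in
lemma coe_mapRange_aux {M N : Type} [AddCommGroup M] [AddCommGroup N]
    (gM : ℤ → AddSubgroup M) (gN : ℤ → AddSubgroup N)
    (f : N →+ M)
    (φ : ∀ i : ℤ, gN i →+ gM i)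
    (hφ : ∀ i x, (φ i x : M) = f x)
    (w : DirectSum ℤ fun i => gN i) :
    (DirectSum.coeAddMonoidHom gM (DFinsupp.mapRange.addMonoidHom φ w)) =
      f (DirectSum.coeAddMonoidHom gN w) := by
  induction w using DirectSum.induction_on with
  | zero => simp
  | of i x =>
      have h1 : DFinsupp.mapRange.addMonoidHom φ (DirectSum.of (fun i => ↥(gN i)) i x)
          = DirectSum.of (fun i => ↥(gM i)) i (φ i x) := by
        rw [DFinsupp.mapRange.addMonoidHom_apply]
        exact DFinsupp.mapRange_single
      rw [h1, DirectSum.coeAddMonoidHom_of, DirectSum.coeAddMonoidHom_of, hφ]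
  | add x y hx hy => rw [map_add, map_add, map_add, hx, hy, map_add]

set_option maxHeartbeats 800000 in
set_option synthInstance.maxHeartbeats 200000 in
/-- Homogeneous surjectivity: a degree-preserving surjection is surjective on graded pieces. -/
lemma exists_homog_preimage_aux {M L : Type} [AddCommGroup M] [AddCommGroup L]
    (gM : ℤ → AddSubgroup M) (gL : ℤ → AddSubgroup L)
    (hMint : Function.Surjective (DirectSum.coeAddMonoidHom gM))
    (hLinj : Function.Injective (DirectSum.coeAddMonoidHom gL))
    (g : M →+ L) (hg : Function.Surjective g)
    (hggr : ∀ (j : ℤ), ∀ x ∈ gM j, g x ∈ gL j)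
    (j : ℤ) (l : L) (hl : l ∈ gL j) : ∃ m ∈ gM j, g m = l := by
  obtain ⟨m, hm⟩ := hg l
  obtain ⟨w, hw⟩ := hMint m
  set φ : ∀ i : ℤ, gM i →+ gL i := fun i =>
    AddMonoidHom.mk' (fun y => ⟨g y, hggr i y y.2⟩)
      (fun a b => by ext; simp) with hφdef
  have h1 : DirectSum.coeAddMonoidHom gL (DFinsupp.mapRange.addMonoidHom φ w) = l := by
    rw [coe_mapRange_aux gL gM g φ (fun i x => rfl), hw, hm]
  have h2 : DirectSum.coeAddMonoidHom gL (DirectSum.of (fun i => ↥(gL i)) j ⟨l, hl⟩) = l :=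
    DirectSum.coeAddMonoidHom_of gL j ⟨l, hl⟩
  have h3 : DFinsupp.mapRange.addMonoidHom φ w = DirectSum.of (fun i => ↥(gL i)) j ⟨l, hl⟩ :=
    hLinj (h1.trans h2.symm)
  have h4 := congrArg (fun v => (v j : L)) h3
  simp only [DFinsupp.mapRange.addMonoidHom_apply, DFinsupp.mapRange_apply,
    DirectSum.of_eq_same] at h4
  exact ⟨(w j : M), (w j).2, h4⟩

set_option maxHeartbeats 800000 in
set_option synthInstance.maxHeartbeats 200000 in
/-- Homogeneous reflection: if `f` is an injective degree-preserving map and `f x` is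
homogeneous of degree `j`, then so is `x`. -/
lemma mem_of_map_mem_aux {M N : Type} [AddCommGroup M] [AddCommGroup N]
    (gM : ℤ → AddSubgroup M) (gN : ℤ → AddSubgroup N)
    (hMinj : Function.Injective (DirectSum.coeAddMonoidHom gM))
    (hNsurj : Function.Surjective (DirectSum.coeAddMonoidHom gN))
    (f : N →+ M) (hf : Function.Injective f)
    (hfgr : ∀ (j : ℤ), ∀ x ∈ gN j, f x ∈ gM j)
    (j : ℤ) (x : N) (hx : f x ∈ gM j) : x ∈ gN j := by
  obtain ⟨w, hw⟩ := hNsurj x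
  set φ : ∀ i : ℤ, gN i →+ gM i := fun i =>
    AddMonoidHom.mk' (fun y => ⟨f y, hfgr i y y.2⟩)
      (fun a b => by ext; simp) with hφdef
  have h1 : DirectSum.coeAddMonoidHom gM (DFinsupp.mapRange.addMonoidHom φ w) = f x := by
    rw [coe_mapRange_aux gM gN f φ (fun i x => rfl), hw]
  have h2 : DirectSum.coeAddMonoidHom gM (DirectSum.of (fun i => ↥(gM i)) j ⟨f x, hx⟩) = f x :=
    DirectSum.coeAddMonoidHom_of gM j ⟨f x, hx⟩
  have h3 : DFinsupp.mapRange.addMonoidHom φ w = DirectSum.of (fun i => ↥(gM i)) j ⟨f x, hx⟩ :=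
    hMinj (h1.trans h2.symm)
  have h4 : ∀ i, i ≠ j → w i = 0 := by
    intro i hi
    have h5 := congrArg (fun v => (v i : M)) h3
    simp only [DFinsupp.mapRange.addMonoidHom_apply, DFinsupp.mapRange_apply,
      DirectSum.of_eq_of_ne _ _ _ hi] at h5
    have h6 : f ((w i : N)) = 0 := by
      simpa [hφdef] using h5
    have h7 : (w i : N) = 0 := hf (by rw [h6, map_zero])
    exact Subtype.ext h7
  have h8 : w = DirectSum.of (fun i => ↥(gN i)) j (w j) := by
    refine DFinsupp.ext fun i => ?_
    by_cases h : i = j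
    · subst h; rw [DirectSum.of_eq_same]
    · rw [DirectSum.of_eq_of_ne _ _ _ h]; exact h4 i h
  have h9 := DirectSum.coeAddMonoidHom_of gN j (w j)
  rw [← h8, hw] at h9
  exact h9 ▸ (w j).2

end AuxGrading

lemma euler_smul_mem (M : Type) [AddCommGroup M] [Module (WeylAlgebra K n) M]
    (gM : ℤ → AddSubgroup M) (hM : IsGradedWeylModule K n M gM)
    (j : ℤ) (m : M) (hm : m ∈ gM j) : euler K n • m ∈ gM j := by
  rw [euler, Finset.sum_smul]
  refine AddSubgroup.sum_mem _ fun i _ => ?_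
  rw [mul_smul]
  have h1 := hM.2.2 i j m hm
  have h2 := hM.2.1 i (j - 1) _ h1
  simpa using h2

lemma pow_euler_sub_smul_mem (M : Type) [AddCommGroup M] [Module (WeylAlgebra K n) M]
    (gM : ℤ → AddSubgroup M) (hM : IsGradedWeylModule K n M gM)
    (c : ℕ) (j : ℤ) : ∀ m ∈ gM j, ((euler K n - (j : WeylAlgebra K n)) ^ c) • m ∈ gM j := by
  induction c with
  | zero => intro m hm; simpa using hm
  | succ c ih =>
      intro m hm
      rw [pow_succ, mul_smul]
      refine ih _ ?_
      rw [sub_smul, Int.cast_smul_eq_zsmul]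
      exact AddSubgroup.sub_mem _ (euler_smul_mem K n M gM hM j m hm)
        (AddSubgroup.zsmul_mem _ hm j)

/-- Let `0 → N → M → L → 0` be a short exact sequence of graded `A_n(K)`-modules (the maps
being degree-preserving). Then `M` is strongly generalized Eulerian if and only if both `N`
and `L` are strongly generalized Eulerian. -/
theorem sge_of_ses [CharZero K]
    (M N L : Type) [AddCommGroup M] [AddCommGroup N] [AddCommGroup L]
    [Module (WeylAlgebra K n) M] [Module (WeylAlgebra K n) N] [Module (WeylAlgebra K n) L]
    (gM : ℤ → AddSubgroup M) (gN : ℤ → AddSubgroup N) (gL : ℤ → AddSubgroup L)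
    (hM : IsGradedWeylModule K n M gM) (hN : IsGradedWeylModule K n N gN)
    (hL : IsGradedWeylModule K n L gL)
    (f : N →ₗ[WeylAlgebra K n] M) (g : M →ₗ[WeylAlgebra K n] L)
    (hf : Function.Injective f) (hg : Function.Surjective g)
    (hfg : Function.Exact f g)
    (hfgr : ∀ (j : ℤ), ∀ x ∈ gN j, f x ∈ gM j)
    (hggr : ∀ (j : ℤ), ∀ x ∈ gM j, g x ∈ gL j) :
    IsStronglyGeneralizedEulerian K n M gM ↔
      IsStronglyGeneralizedEulerian K n N gN ∧ IsStronglyGeneralizedEulerian K n L gL := by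
  constructor
  · rintro ⟨a, ha, hMa⟩
    refine ⟨⟨a, ha, fun j x hx => ?_⟩, ⟨a, ha, fun j l hl => ?_⟩⟩
    · apply hf
      rw [map_zero, map_smul]
      exact hMa j (f x) (hfgr j x hx)
    · obtain ⟨m, hm, hgm⟩ := exists_homog_preimage_aux gM gL hM.1.surjective hL.1.injective
        g.toAddMonoidHom hg hggr j l hl
      rw [← hgm, show (g.toAddMonoidHom m : L) = g m from rfl, ← map_smul, hMa j m hm, map_zero]
  · rintro ⟨⟨a, ha, hNa⟩, ⟨b, hb, hLb⟩⟩
    refine ⟨a + b, by omega, fun j m hm => ?_⟩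
    set e := euler K n - (j : WeylAlgebra K n) with he
    have hu : (e ^ b) • m ∈ gM j := pow_euler_sub_smul_mem K n M gM hM b j m hm
    have hgu : g ((e ^ b) • m) = 0 := by
      rw [map_smul]
      exact hLb j (g m) (hggr j m hm)
    obtain ⟨x, hx⟩ := (hfg _).mp hgu
    have hxj : x ∈ gN j := mem_of_map_mem_aux gM gN hM.1.injective hN.1.surjective
      f.toAddMonoidHom hf hfgr j x (by rw [show (f.toAddMonoidHom x : M) = f x from rfl, hx]; exact hu)
    calc (e ^ (a + b)) • m = (e ^ a) • ((e ^ b) • m) := by rw [pow_add, mul_smul]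
      _ = (e ^ a) • f x := by rw [hx]
      _ = f ((e ^ a) • x) := (map_smul f _ _).symm
      _ = 0 := by rw [hNa j x hxj, map_zero]
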